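/- If ζ : ℝ → ℝ is four times continuously differentiable and λ-periodic for some λ > 0 (i.e. ζ(x+λ) = ζ(x) for all x ∈ ℝ), then ∫_0^λ H(ζ)(x) dx = 0. -/

import Mathlib

open Real

/-- ω(ζ) = (1 + ζ'²)^{1/2}. -/
noncomputable def omg (ζ : ℝ → ℝ) (x : ℝ) : ℝ :=
  Real.sqrt (1 + (deriv ζ x) ^ 2)

/-- The hydroelastic operator
H(ζ) = ω(ζ)⁻¹·(ω(ζ)⁻¹·(ω(ζ)⁻³·ζ'')')' + (1/2)·(ω(ζ)⁻³·ζ'')³. -/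
noncomputable def Hop (ζ : ℝ → ℝ) (x : ℝ) : ℝ :=
  (omg ζ x)⁻¹ *
      deriv (fun y => (omg ζ y)⁻¹ *
        deriv (fun z => ((omg ζ z) ^ 3)⁻¹ * deriv (deriv ζ) z) y) x
    + (1 / 2) * (((omg ζ x) ^ 3)⁻¹ * deriv (deriv ζ) x) ^ 3

set_option maxHeartbeats 1000000

lemma periodic_deriv_aux (f : ℝ → ℝ) (c : ℝ) (h : ∀ x, f (x + c) = f x) :
    ∀ x, deriv f (x + c) = deriv f x := by
  intro x
  have hf : (fun y => f (y + c)) = f := funext h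
  have := deriv_comp_add_const f c x
  rw [hf] at this
  exact this.symm

lemma hop_alg (w u a b c : ℝ) (hw : w ≠ 0) (h2 : w ^ 2 = 1 + u ^ 2) :
    w⁻¹ * (c / w ^ 4 - 10 * u * a * b / w ^ 6 - 3 * a ^ 3 / w ^ 6
        + 18 * u ^ 2 * a ^ 3 / w ^ 8) + (1 / 2) * ((w ^ 3)⁻¹ * a) ^ 3
      = c / w ^ 5 - 10 * u * a * b / w ^ 7 - (5 / 2) * a ^ 3 / w ^ 7
        + (35 / 2) * u ^ 2 * a ^ 3 / w ^ 9 := by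
  have e : c / w ^ 5 - 10 * u * a * b / w ^ 7 - (5 / 2) * a ^ 3 / w ^ 7
        + (35 / 2) * u ^ 2 * a ^ 3 / w ^ 9
      - (w⁻¹ * (c / w ^ 4 - 10 * u * a * b / w ^ 6 - 3 * a ^ 3 / w ^ 6
          + 18 * u ^ 2 * a ^ 3 / w ^ 8) + (1 / 2) * ((w ^ 3)⁻¹ * a) ^ 3)
      = (a ^ 3 / (2 * w ^ 9)) * (w ^ 2 - 1 - u ^ 2) := by
    field_simp
    ring
  have h2' : w ^ 2 - 1 - u ^ 2 = 0 := by rw [h2]; ring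
  rw [h2', mul_zero] at e
  linarith

/-- If ζ is C⁴ and λ-periodic (λ > 0), then ∫_0^λ H(ζ) dx = 0. -/
theorem integral_Hop_eq_zero (ζ : ℝ → ℝ) (hζ : ContDiff ℝ 4 ζ)
    (lam : ℝ) (hlam : 0 < lam) (hper : ∀ x : ℝ, ζ (x + lam) = ζ x) :
    (∫ x in (0:ℝ)..lam, Hop ζ x) = 0 := by
  have hu : ContDiff ℝ 3 (deriv ζ) :=
    (contDiff_succ_iff_deriv.mp (show ContDiff ℝ (3 + 1) ζ from hζ)).2.2
  have ha : ContDiff ℝ 2 (deriv (deriv ζ)) :=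
    (contDiff_succ_iff_deriv.mp (show ContDiff ℝ (2 + 1) _ from hu)).2.2
  have hb : ContDiff ℝ 1 (deriv (deriv (deriv ζ))) :=
    (contDiff_succ_iff_deriv.mp (show ContDiff ℝ (1 + 1) _ from ha)).2.2
  have hccont : Continuous (deriv (deriv (deriv (deriv ζ)))) :=
    ((contDiff_succ_iff_deriv.mp (show ContDiff ℝ (0 + 1) _ from hb)).2.2).continuous
  have had : ∀ x, HasDerivAt (deriv ζ) (deriv (deriv ζ) x) x := fun x =>
    ((hu.differentiable (by norm_num)) x).hasDerivAt
  have hbd : ∀ x, HasDerivAt (deriv (deriv ζ)) (deriv (deriv (deriv ζ)) x) x := fun x =>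
    ((ha.differentiable (by norm_num)) x).hasDerivAt
  have hcd : ∀ x, HasDerivAt (deriv (deriv (deriv ζ)))
      (deriv (deriv (deriv (deriv ζ))) x) x := fun x =>
    ((hb.differentiable (by norm_num)) x).hasDerivAt
  have hwpos : ∀ x, 0 < omg ζ x := fun x => Real.sqrt_pos.mpr (by positivity)
  have hwne : ∀ x, omg ζ x ≠ 0 := fun x => (hwpos x).ne'
  have hwsq : ∀ x, omg ζ x ^ 2 = 1 + (deriv ζ x) ^ 2 := fun x =>
    Real.sq_sqrt (by positivity)
  have hwd : ∀ x, HasDerivAt (omg ζ)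
      (deriv ζ x * deriv (deriv ζ) x / omg ζ x) x := by
    intro x
    have h1 : HasDerivAt (fun y => 1 + deriv ζ y ^ 2)
        (2 * deriv ζ x * deriv (deriv ζ) x) x := by
      have := ((had x).pow 2).const_add 1
      refine this.congr_deriv ?_
      push_cast
      ring
    have h2 := (Real.hasDerivAt_sqrt
      (by positivity : (1 : ℝ) + deriv ζ x ^ 2 ≠ 0)).comp x h1
    refine h2.congr_deriv ?_
    rw [show omg ζ x = Real.sqrt (1 + deriv ζ x ^ 2) from rfl]
    rw [← Real.sq_sqrt (by positivity : (0:ℝ) ≤ 1 + deriv ζ x ^ 2)]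
    have hs : Real.sqrt (1 + deriv ζ x ^ 2) ≠ 0 := hwne x
    field_simp
  -- Step A: derivative of g = ω⁻³ ζ''
  have hg : ∀ x, HasDerivAt (fun z => ((omg ζ z) ^ 3)⁻¹ * deriv (deriv ζ) z)
      (deriv (deriv (deriv ζ)) x / (omg ζ x) ^ 3
        - 3 * deriv ζ x * (deriv (deriv ζ) x) ^ 2 / (omg ζ x) ^ 5) x := by
    intro x
    have h3 : HasDerivAt (fun y => (omg ζ y) ^ 3)
        ((3 : ℕ) * (omg ζ x) ^ 2 * (deriv ζ x * deriv (deriv ζ) x / omg ζ x)) x :=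
      (hwd x).pow 3
    have h4 := (h3.inv (pow_ne_zero 3 (hwne x))).mul (hbd x)
    refine h4.congr_deriv ?_
    have hs := hwne x
    simp only [Pi.inv_apply, Pi.pow_apply, Pi.div_apply, Pi.mul_apply, Pi.sub_apply]
    field_simp
    ring
  have hgd : deriv (fun z => ((omg ζ z) ^ 3)⁻¹ * deriv (deriv ζ) z)
      = fun x => deriv (deriv (deriv ζ)) x / (omg ζ x) ^ 3
        - 3 * deriv ζ x * (deriv (deriv ζ) x) ^ 2 / (omg ζ x) ^ 5 :=
    funext fun x => (hg x).deriv
  -- Step B: derivative of h = ω⁻¹ g'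
  have hh : ∀ x, HasDerivAt (fun y => (omg ζ y)⁻¹ *
        deriv (fun z => ((omg ζ z) ^ 3)⁻¹ * deriv (deriv ζ) z) y)
      (deriv (deriv (deriv (deriv ζ))) x / (omg ζ x) ^ 4
        - 10 * deriv ζ x * deriv (deriv ζ) x * deriv (deriv (deriv ζ)) x / (omg ζ x) ^ 6
        - 3 * (deriv (deriv ζ) x) ^ 3 / (omg ζ x) ^ 6
        + 18 * (deriv ζ x) ^ 2 * (deriv (deriv ζ) x) ^ 3 / (omg ζ x) ^ 8) x := by
    intro x
    simp only [hgd]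
    have t1 : HasDerivAt (fun y => deriv (deriv (deriv ζ)) y / (omg ζ y) ^ 3)
        ((deriv (deriv (deriv (deriv ζ))) x * (omg ζ x) ^ 3
          - deriv (deriv (deriv ζ)) x * ((3 : ℕ) * (omg ζ x) ^ 2
            * (deriv ζ x * deriv (deriv ζ) x / omg ζ x))) / ((omg ζ x) ^ 3) ^ 2) x :=
      (hcd x).div ((hwd x).pow 3) (pow_ne_zero 3 (hwne x))
    have t2num : HasDerivAt (fun y => 3 * deriv ζ y * (deriv (deriv ζ) y) ^ 2)
        (3 * deriv (deriv ζ) x * (deriv (deriv ζ) x) ^ 2 + 3 * deriv ζ x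
          * ((2 : ℕ) * deriv (deriv ζ) x ^ 1 * deriv (deriv (deriv ζ)) x)) x :=
      ((had x).const_mul 3).mul ((hbd x).pow 2)
    have t2 := t2num.div ((hwd x).pow 5) (pow_ne_zero 5 (hwne x))
    have t := ((hwd x).inv (hwne x)).mul (t1.sub t2)
    refine t.congr_deriv ?_
    have hs := hwne x
    push_cast
    simp only [Pi.inv_apply, Pi.pow_apply, Pi.div_apply, Pi.mul_apply, Pi.sub_apply]
    field_simp
    ring
  have hHopclean : ∀ x, Hop ζ x = deriv (deriv (deriv (deriv ζ))) x / (omg ζ x) ^ 5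
      - 10 * deriv ζ x * deriv (deriv ζ) x * deriv (deriv (deriv ζ)) x / (omg ζ x) ^ 7
      - (5 / 2) * (deriv (deriv ζ) x) ^ 3 / (omg ζ x) ^ 7
      + (35 / 2) * (deriv ζ x) ^ 2 * (deriv (deriv ζ) x) ^ 3 / (omg ζ x) ^ 9 := by
    intro x
    rw [Hop, (hh x).deriv]
    exact hop_alg (omg ζ x) (deriv ζ x) (deriv (deriv ζ) x)
      (deriv (deriv (deriv ζ)) x) (deriv (deriv (deriv (deriv ζ))) x)
      (hwne x) (hwsq x)
  -- the antiderivative F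
  have hF : ∀ x, HasDerivAt (fun y => ((omg ζ y) ^ 5)⁻¹ * deriv (deriv (deriv ζ)) y
      - (5 / 2) * deriv ζ y * ((omg ζ y) ^ 7)⁻¹ * (deriv (deriv ζ) y) ^ 2)
      (Hop ζ x) x := by
    intro x
    rw [hHopclean x]
    have s1 : HasDerivAt (fun y => ((omg ζ y) ^ 5)⁻¹ * deriv (deriv (deriv ζ)) y)
        (-((5 : ℕ) * (omg ζ x) ^ 4 * (deriv ζ x * deriv (deriv ζ) x / omg ζ x))
            / ((omg ζ x) ^ 5) ^ 2 * deriv (deriv (deriv ζ)) x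
          + ((omg ζ x) ^ 5)⁻¹ * deriv (deriv (deriv (deriv ζ))) x) x :=
      (((hwd x).pow 5).inv (pow_ne_zero 5 (hwne x))).mul (hcd x)
    have s2a : HasDerivAt (fun y => (5 / 2) * deriv ζ y * ((omg ζ y) ^ 7)⁻¹)
        ((5 / 2) * deriv (deriv ζ) x * ((omg ζ x) ^ 7)⁻¹
          + (5 / 2) * deriv ζ x * (-((7 : ℕ) * (omg ζ x) ^ 6
            * (deriv ζ x * deriv (deriv ζ) x / omg ζ x)) / ((omg ζ x) ^ 7) ^ 2)) x :=
      ((had x).const_mul (5 / 2)).mul (((hwd x).pow 7).inv (pow_ne_zero 7 (hwne x)))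
    have s2 := s2a.mul ((hbd x).pow 2)
    have s := s1.sub s2
    refine s.congr_deriv ?_
    have hs := hwne x
    push_cast
    simp only [Pi.inv_apply, Pi.pow_apply, Pi.div_apply, Pi.mul_apply, Pi.sub_apply]
    field_simp
    ring
  -- continuity of Hop
  have hwcont : Continuous (omg ζ) :=
    Real.continuous_sqrt.comp (continuous_const.add (hu.continuous.pow 2))
  have hcont : Continuous (Hop ζ) := by
    have hrw : Hop ζ = fun x => deriv (deriv (deriv (deriv ζ))) x / (omg ζ x) ^ 5
        - 10 * deriv ζ x * deriv (deriv ζ) x * deriv (deriv (deriv ζ)) x / (omg ζ x) ^ 7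
        - (5 / 2) * (deriv (deriv ζ) x) ^ 3 / (omg ζ x) ^ 7
        + (35 / 2) * (deriv ζ x) ^ 2 * (deriv (deriv ζ) x) ^ 3 / (omg ζ x) ^ 9 :=
      funext hHopclean
    rw [hrw]
    have h1 : Continuous (deriv ζ) := hu.continuous
    have h2 : Continuous (deriv (deriv ζ)) := ha.continuous
    have h3 : Continuous (deriv (deriv (deriv ζ))) := hb.continuous
    refine (((hccont.div (hwcont.pow 5)
        (fun x => pow_ne_zero _ (hwne x))).sub
      ((((continuous_const.mul h1).mul h2).mul h3).div (hwcont.pow 7)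
        (fun x => pow_ne_zero _ (hwne x)))).sub
      ((continuous_const.mul (h2.pow 3)).div (hwcont.pow 7)
        (fun x => pow_ne_zero _ (hwne x)))).add
      (((continuous_const.mul (h1.pow 2)).mul (h2.pow 3)).div (hwcont.pow 9)
        (fun x => pow_ne_zero _ (hwne x)))
  -- periodicity
  have hperu : ∀ x, deriv ζ (x + lam) = deriv ζ x := periodic_deriv_aux ζ lam hper
  have hpera : ∀ x, deriv (deriv ζ) (x + lam) = deriv (deriv ζ) x :=
    periodic_deriv_aux (deriv ζ) lam hperu
  have hperb : ∀ x, deriv (deriv (deriv ζ)) (x + lam) = deriv (deriv (deriv ζ)) x :=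
    periodic_deriv_aux (deriv (deriv ζ)) lam hpera
  have hperw : ∀ x, omg ζ (x + lam) = omg ζ x := by
    intro x
    unfold omg
    rw [hperu]
  rw [intervalIntegral.integral_eq_sub_of_hasDerivAt
      (fun x _ => hF x) (hcont.intervalIntegrable 0 lam)]
  rw [show lam = 0 + lam by ring, hperu, hpera, hperb, hperw]
  ring
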